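/- arXiv:0804.3781 — 2 statements merged into one kernel-verified Lean document; each statement's English description precedes it below -/
import Mathlib

section
/- Let π_0, π_1, ..., π_n act on words x = (x_1,...,x_{n+1}) that are permutations of {1,...,n+1}, where for 1 ≤ i ≤ n, π_i swaps x_i and x_{i+1} if x_i > x_{i+1} (else fixes x), and π_0 swaps x_{n+1} and x_1 if x_{n+1} > x_1 (else fixes x). Then the monoid generated by π_0, π_1, ..., π_n acts transitively on the set of all permutations of {1,...,n+1}: for any two permutations u, v there is a composition of these operators mapping u to v. -/
open Equiv

/-- The circular bubble-sort operators on one-line words of permutations of `{1,…,n+1}`,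
indexed cyclically: for `j : Fin (n+1)`, swap the entries in (cyclically adjacent)
positions `j` and `j+1` if the entry at `j` is greater than the entry at `j+1`, else fix.
The operator with `j = Fin.last n` is the affine operator `π_0` (comparing the last and
first letters); the operators with `j ≠ Fin.last n` are `π_1, …, π_n`. -/
def cpi {n : ℕ} (j : Fin (n + 1)) (w : Perm (Fin (n + 1))) : Perm (Fin (n + 1)) :=
  if w (j + 1) < w j then w * Equiv.swap j (j + 1) else w

namespace CpiAux

variable {n : ℕ}

theorem tle {a b : ℕ} (h : a ≤ b) : a < b + 1 := Nat.lt_succ_of_le h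

theorem ltmk {x : Fin (n + 1)} {a : ℕ} {ha : a < n + 1} (h : x.val < a) : x < ⟨a, ha⟩ := h

theorem gtmk {x : Fin (n + 1)} {a : ℕ} {ha : a < n + 1} (h : a < x.val) :
    (⟨a, ha⟩ : Fin (n + 1)) < x := h

theorem mklt {a b : ℕ} {ha : a < n + 1} {hb : b < n + 1} (h : a < b) :
    (⟨a, ha⟩ : Fin (n + 1)) < ⟨b, hb⟩ := h

theorem nemk {x : Fin (n + 1)} {a : ℕ} {ha : a < n + 1} (h : x.val ≠ a) : x ≠ ⟨a, ha⟩ :=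
  fun he => h (congrArg Fin.val he)

theorem mkeq {a b : ℕ} {ha : a < n + 1} {hb : b < n + 1} (h : a = b) :
    (⟨a, ha⟩ : Fin (n + 1)) = ⟨b, hb⟩ := Fin.ext h

theorem eqmk {x : Fin (n + 1)} {a : ℕ} {ha : a < n + 1} (h : x.val = a) : x = ⟨a, ha⟩ :=
  Fin.ext h

theorem lemk {a b : ℕ} {hb : b < n + 1} (h : a ≤ b) : a ≤ (⟨b, hb⟩ : Fin (n + 1)).val := h

theorem ltlast {x : Fin (n + 1)} (h : x.val < n) : x < Fin.last n := h

theorem mklast {a : ℕ} {ha : a < n + 1} (h : a < n) : (⟨a, ha⟩ : Fin (n + 1)) < Fin.last n := h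

theorem eqlast {x : Fin (n + 1)} (h : x.val = n) : x = Fin.last n := Fin.ext h

theorem lelast {a : ℕ} (h : a ≤ n) : a ≤ (Fin.last n).val := h

/-- Reachability by a sequence of circular bubble-sort operators. -/
def Reach (u v : Perm (Fin (n + 1))) : Prop :=
  ∃ l : List (Fin (n + 1)), l.foldl (fun w j => cpi j w) u = v

theorem Reach.refl (u : Perm (Fin (n + 1))) : Reach u u := ⟨[], rfl⟩

theorem Reach.trans {u v w : Perm (Fin (n + 1))} (h1 : Reach u v) (h2 : Reach v w) :
    Reach u w := by
  obtain ⟨l1, h1⟩ := h1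
  obtain ⟨l2, h2⟩ := h2
  exact ⟨l1 ++ l2, by rw [List.foldl_append, h1, h2]⟩

theorem Reach.step (j : Fin (n + 1)) {u v : Perm (Fin (n + 1))} (h : cpi j u = v) :
    Reach u v := ⟨[j], h⟩

theorem cpi_eq (j : Fin (n + 1)) (w : Perm (Fin (n + 1))) (h : w (j + 1) < w j) :
    cpi j w = w * Equiv.swap j (j + 1) := if_pos h

/-- `w` fixes all positions with index `≥ m`. -/
def Fixd (m : ℕ) (w : Perm (Fin (n + 1))) : Prop :=
  ∀ i : Fin (n + 1), m ≤ i.val → w i = i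

theorem Fixd.mono {m m' : ℕ} (h : m ≤ m') {w : Perm (Fin (n + 1))} (hw : Fixd m w) :
    Fixd m' w := fun i hi => hw i (le_trans h hi)

theorem Fixd.val_lt {m : ℕ} {w : Perm (Fin (n + 1))} (hw : Fixd m w) {i : Fin (n + 1)}
    (hi : i.val < m) : (w i).val < m := by
  by_contra h'
  have h1 : w (w i) = w i := hw _ (le_of_not_gt h')
  have h2 : w i = i := w.injective h1
  rw [h2] at h'
  omega

theorem fin_add_one (x : Fin (n + 1)) (h : x.val < n) :
    x + 1 = ⟨x.val + 1, Nat.succ_lt_succ h⟩ := by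
  apply Fin.ext
  rw [Fin.val_add_one_of_lt (ltlast h)]

theorem I1 (t : ℕ) (h : t + 1 ≤ n) :
    Fin.cycleRange (⟨t + 1, tle h⟩ : Fin (n + 1)) =
      Fin.cycleRange ⟨t, tle (Nat.le_of_succ_le h)⟩ *
        Equiv.swap ⟨t, tle (Nat.le_of_succ_le h)⟩ ⟨t + 1, tle h⟩ := by
  ext x
  rw [Perm.mul_apply]
  rcases lt_trichotomy x.val t with hx | hx | hx
  · rw [swap_apply_of_ne_of_ne (nemk (x := x) (a := t) (by omega))
        (nemk (x := x) (a := t + 1) (by omega)),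
      Fin.cycleRange_of_lt (ltmk (x := x) (a := t + 1) (by omega)),
      Fin.cycleRange_of_lt (ltmk (x := x) (a := t) (by omega))]
  · have hxe : x = ⟨t, tle (Nat.le_of_succ_le h)⟩ := eqmk hx
    rw [hxe, swap_apply_left,
      Fin.cycleRange_of_gt (mklt (a := t) (b := t + 1) (by omega)),
      Fin.cycleRange_of_lt (mklt (a := t) (b := t + 1) (by omega)),
      fin_add_one ⟨t, tle (Nat.le_of_succ_le h)⟩ (show t < n from h)]
  · rcases eq_or_lt_of_le (show t + 1 ≤ x.val by omega) with hx1 | hx1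
    · have hxe : x = ⟨t + 1, tle h⟩ := eqmk hx1.symm
      rw [hxe, swap_apply_right, Fin.cycleRange_self, Fin.cycleRange_self]
    · rw [swap_apply_of_ne_of_ne (nemk (x := x) (a := t) (by omega))
          (nemk (x := x) (a := t + 1) (by omega)),
        Fin.cycleRange_of_gt (gtmk (x := x) (a := t + 1) (by omega)),
        Fin.cycleRange_of_gt (gtmk (x := x) (a := t) (by omega))]

theorem I2 (hn : 1 ≤ n) :
    Equiv.swap (0 : Fin (n + 1)) (Fin.last n) * Fin.cycleRange (Fin.last n) =
      Fin.cycleRange (⟨n - 1, tle (Nat.sub_le n 1)⟩ : Fin (n + 1)) := by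
  ext x
  rw [Perm.mul_apply]
  rcases lt_trichotomy x.val (n - 1) with hx | hx | hx
  · have hxn : x.val < n := by omega
    rw [Fin.cycleRange_of_lt (ltlast (x := x) hxn), fin_add_one x hxn,
      swap_apply_of_ne_of_ne
        (Fin.ne_of_val_ne (show x.val + 1 ≠ (0 : Fin (n+1)).val by rw [Fin.val_zero]; omega))
        (Fin.ne_of_val_ne (show x.val + 1 ≠ (Fin.last n).val by rw [Fin.val_last]; omega)),
      Fin.cycleRange_of_lt (ltmk (x := x) (a := n - 1) (by omega)),
      fin_add_one x hxn]
  · have hxe : x = ⟨n - 1, tle (Nat.sub_le n 1)⟩ := eqmk hx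
    rw [hxe]
    have h1 : Fin.cycleRange (Fin.last n) (⟨n - 1, tle (Nat.sub_le n 1)⟩ : Fin (n+1))
        = Fin.last n := by
      rw [Fin.cycleRange_of_lt (mklast (a := n - 1) (Nat.sub_lt hn Nat.one_pos)),
        fin_add_one ⟨n - 1, tle (Nat.sub_le n 1)⟩ (Nat.sub_lt hn Nat.one_pos)]
      exact Fin.ext (show n - 1 + 1 = n by omega)
    rw [h1, swap_apply_right, Fin.cycleRange_self]
  · have hxe : x = Fin.last n := eqlast (by omega)
    rw [hxe, Fin.cycleRange_self, swap_apply_left,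
      Fin.cycleRange_of_gt (mklast (a := n - 1) (Nat.sub_lt hn Nat.one_pos))]

theorem bubble0 : ∀ (t : ℕ) (ht : t ≤ n) (u : Perm (Fin (n + 1)))
    (hu : u 0 = Fin.last n), Reach u (u * Fin.cycleRange ⟨t, tle ht⟩) := by
  intro t
  induction t with
  | zero =>
    intro _ u _
    rw [show (⟨0, Nat.succ_pos n⟩ : Fin (n + 1)) = 0 from rfl, Fin.cycleRange_zero, mul_one]
    exact Reach.refl u
  | succ t IH =>
    intro ht u hu
    have hle : t ≤ n := Nat.le_of_succ_le ht
    refine (IH hle u hu).trans (Reach.step ⟨t, tle hle⟩ ?_)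
    have h1 : (⟨t, tle hle⟩ : Fin (n + 1)) + 1 = ⟨t + 1, tle ht⟩ := by
      rw [fin_add_one ⟨t, tle hle⟩ (show t < n from ht)]
    have hcv : (u * Fin.cycleRange (⟨t, tle hle⟩ : Fin (n+1))) (⟨t, tle hle⟩ : Fin (n+1))
        = Fin.last n := by
      rw [Perm.mul_apply, Fin.cycleRange_self, hu]
    have hcv2 : (u * Fin.cycleRange (⟨t, tle hle⟩ : Fin (n+1)))
        ((⟨t, tle hle⟩ : Fin (n+1)) + 1) = u ⟨t + 1, tle ht⟩ := by
      rw [h1, Perm.mul_apply, Fin.cycleRange_of_gt (mklt (a := t) (b := t + 1) (by omega))]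
    have hne : u ⟨t + 1, tle ht⟩ ≠ Fin.last n := by
      intro h
      have h2 := u.injective (h.trans hu.symm)
      have h3 : t + 1 = (0 : Fin (n+1)).val := congrArg Fin.val h2
      rw [Fin.val_zero] at h3
      omega
    have hcond : (u * Fin.cycleRange (⟨t, tle hle⟩ : Fin (n+1)))
        ((⟨t, tle hle⟩ : Fin (n+1)) + 1)
        < (u * Fin.cycleRange (⟨t, tle hle⟩ : Fin (n+1))) ⟨t, tle hle⟩ := by
      rw [hcv, hcv2]
      exact Fin.lt_last_iff_ne_last.2 hne
    rw [cpi_eq _ _ hcond, h1, mul_assoc, ← I1 t ht]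

theorem place (q : ℕ) (hq : q ≤ n) (hn : 1 ≤ n) (w : Perm (Fin (n + 1)))
    (hw : w (Fin.last n) = Fin.last n) :
    Reach w (w * (Equiv.swap 0 (Fin.last n) * Fin.cycleRange ⟨q, tle hq⟩)) := by
  have h0ne : (0 : Fin (n+1)) ≠ Fin.last n := by
    apply Fin.ne_of_val_ne
    rw [Fin.val_zero, Fin.val_last]
    omega
  have hne : w 0 ≠ Fin.last n := by
    intro h
    exact h0ne (w.injective (h.trans hw.symm))
  have hcond : w (Fin.last n + 1) < w (Fin.last n) := by
    rw [Fin.last_add_one, hw]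
    exact Fin.lt_last_iff_ne_last.2 hne
  have hstep : cpi (Fin.last n) w = w * Equiv.swap 0 (Fin.last n) := by
    rw [cpi_eq _ _ hcond, Fin.last_add_one, swap_comm]
  have h2 : (w * Equiv.swap 0 (Fin.last n)) 0 = Fin.last n := by
    rw [Perm.mul_apply, swap_apply_left, hw]
  have h3 := (Reach.step _ hstep).trans (bubble0 q hq _ h2)
  rwa [mul_assoc] at h3

theorem rot : ∀ (k m : ℕ) (hnm : n = m + k) (h1 : 1 ≤ m) (hmn : m ≤ n)
    (w : Perm (Fin (n + 1))) (hw : Fixd m w),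
    Reach w (w * Fin.cycleRange ⟨m - 1, tle (le_trans (Nat.sub_le m 1) hmn)⟩) := by
  intro k
  induction k with
  | zero =>
    intro m hnm h1 hmn w hw
    have hw' : w (Fin.last n) = Fin.last n := hw _ (lelast (by omega))
    have h2 := place m hmn (by omega) w hw'
    have e : (⟨m, tle hmn⟩ : Fin (n+1)) = Fin.last n := eqlast (show m = n by omega)
    rw [e, I2 (by omega)] at h2
    have e2 : (⟨n - 1, tle (Nat.sub_le n 1)⟩ : Fin (n+1))
        = ⟨m - 1, tle (le_trans (Nat.sub_le m 1) hmn)⟩ := mkeq (by omega)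
    rwa [e2] at h2
  | succ k IH =>
    intro m hnm h1 hmn w hw
    have hmn1 : m + 1 ≤ n := by omega
    have IH2 := IH (m + 1) (by omega) (by omega) hmn1 w (hw.mono (by omega))
    have hmk : (⟨m + 1 - 1, tle (le_trans (Nat.sub_le (m + 1) 1) hmn1)⟩ : Fin (n+1))
        = ⟨m, tle hmn⟩ := mkeq rfl
    rw [hmk] at IH2
    have bm1 : m - 1 < n + 1 := tle (le_trans (Nat.sub_le m 1) hmn)
    refine IH2.trans (Reach.step ⟨m - 1, bm1⟩ ?_)
    have h1' : (⟨m - 1, bm1⟩ : Fin (n + 1)) + 1 = ⟨m, tle hmn⟩ := by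
      rw [fin_add_one ⟨m - 1, bm1⟩ (show m - 1 < n by omega)]
      exact Fin.ext (show m - 1 + 1 = m by omega)
    have hv1 : (w * Fin.cycleRange (⟨m, tle hmn⟩ : Fin (n+1))) ((⟨m - 1, bm1⟩ : Fin (n+1)) + 1)
        = w 0 := by
      rw [h1', Perm.mul_apply, Fin.cycleRange_self]
    have hv2 : (w * Fin.cycleRange (⟨m, tle hmn⟩ : Fin (n+1))) (⟨m - 1, bm1⟩ : Fin (n+1))
        = ⟨m, tle hmn⟩ := by
      rw [Perm.mul_apply, Fin.cycleRange_of_lt (mklt (a := m - 1) (b := m) (by omega)), h1',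
        hw _ (lemk le_rfl)]
    have hcond : (w * Fin.cycleRange (⟨m, tle hmn⟩ : Fin (n+1))) ((⟨m - 1, bm1⟩ : Fin (n+1)) + 1)
        < (w * Fin.cycleRange (⟨m, tle hmn⟩ : Fin (n+1))) ⟨m - 1, bm1⟩ := by
      rw [hv1, hv2]
      exact ltmk (hw.val_lt (show (0 : Fin (n+1)).val < m by rw [Fin.val_zero]; omega))
    rw [cpi_eq _ _ hcond, h1', mul_assoc]
    congr 1
    have hI1n : (m - 1) + 1 ≤ n := by omega
    have hI := I1 (m - 1) hI1n
    have e1 : (⟨m - 1 + 1, tle hI1n⟩ : Fin (n+1)) = ⟨m, tle hmn⟩ := mkeq (by omega)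
    rw [e1] at hI
    rw [hI, mul_assoc, swap_mul_self, mul_one]

theorem pow_fix {α : Type*} [DecidableEq α] (p : Perm α) {x : α} (h : p x = x) :
    ∀ j : ℕ, (p ^ j) x = x
  | 0 => rfl
  | (j + 1) => by rw [pow_succ, Perm.mul_apply, h, pow_fix p h j]

theorem home_aux (m : ℕ) (hm : m ≤ n) : ∀ (k : ℕ) (w : Perm (Fin (n + 1)))
    (hw : Fixd (m + 1) w) (p : Fin (n + 1)) (hp : p.val = m - k)
    (hwp : w p = ⟨m, tle hm⟩), ∃ w', Reach w w' ∧ Fixd m w' := by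
  intro k
  induction k with
  | zero =>
    intro w hw p hp hwp
    refine ⟨w, Reach.refl w, fun i hi => ?_⟩
    rcases eq_or_lt_of_le hi with h | h
    · have hie : i = p := Fin.ext (by omega)
      rw [hie, hwp]
      exact (eqmk (show p.val = m by omega)).symm
    · exact hw i h
  | succ k IH =>
    intro w hw p hp hwp
    by_cases hk : k + 1 ≤ m
    · have hpn : p < Fin.last n := ltlast (by omega)
      have hp1 : (p + 1).val = p.val + 1 := Fin.val_add_one_of_lt hpn
      have hvlt : (w (p + 1)).val < m + 1 := hw.val_lt (by omega)
      have hvne : w (p + 1) ≠ ⟨m, tle hm⟩ := by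
        intro h
        have h2 := w.injective (h.trans hwp.symm)
        have h3 := congrArg Fin.val h2
        omega
      have hvne' : (w (p + 1)).val ≠ m := fun h => hvne (eqmk h)
      have hcond : w (p + 1) < w p := by
        rw [hwp]
        exact ltmk (by omega)
      have hstep : cpi p w = w * Equiv.swap p (p + 1) := cpi_eq _ _ hcond
      have hw2f : Fixd (m + 1) (w * Equiv.swap p (p + 1)) := by
        intro i hi
        rw [Perm.mul_apply,
          swap_apply_of_ne_of_ne (fun he => by rw [he] at hi; omega)
            (fun he => by rw [he] at hi; omega)]
        exact hw i hi
      have hw2m : (w * Equiv.swap p (p + 1)) (p + 1) = ⟨m, tle hm⟩ := by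
        rw [Perm.mul_apply, swap_apply_right]
        exact hwp
      obtain ⟨w', hr, hf⟩ := IH _ hw2f (p + 1) (by omega) hw2m
      exact ⟨w', (Reach.step _ hstep).trans hr, hf⟩
    · exact IH w hw p (by omega) hwp

theorem home (m : ℕ) (hm : m ≤ n) (w : Perm (Fin (n + 1))) (hw : Fixd (m + 1) w) :
    ∃ w', Reach w w' ∧ Fixd m w' := by
  obtain ⟨p, hwp⟩ : ∃ p, w p = ⟨m, tle hm⟩ := ⟨_, Equiv.apply_symm_apply w _⟩
  have hple : p.val ≤ m := by
    by_contra h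
    have h1 := hw p (show m + 1 ≤ p.val by omega)
    rw [h1] at hwp
    have h2 : p.val = m := congrArg Fin.val hwp
    omega
  exact home_aux m hm (m - p.val) w hw p (by omega) hwp

theorem main : ∀ (m : ℕ) (hm : m ≤ n) (w v : Perm (Fin (n + 1)))
    (hw : Fixd m w) (hv : Fixd m v), Reach w v := by
  intro m
  induction m with
  | zero =>
    intro _ w v hw hv
    have h : w = v := Equiv.ext fun i => (hw i (Nat.zero_le _)).trans (hv i (Nat.zero_le _)).symm
    exact h ▸ Reach.refl w
  | succ m IH =>
    intro hm w v hw hv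
    have hmn0 : m ≤ n := Nat.le_of_succ_le hm
    have bm : m < n + 1 := tle hmn0
    obtain ⟨w1, hr1, hw1⟩ := home m hmn0 w hw
    obtain ⟨q, hvq⟩ : ∃ q, v q = ⟨m, bm⟩ := ⟨_, Equiv.apply_symm_apply v _⟩
    have hqle : q.val ≤ m := by
      by_contra h
      have h1 := hv q (show m + 1 ≤ q.val by omega)
      rw [h1] at hvq
      have h2 : q.val = m := congrArg Fin.val hvq
      omega
    by_cases hqm : q.val = m
    · have hvm : Fixd m v := by
        intro i hi
        rcases eq_or_lt_of_le hi with h | h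
        · have hiq : i = q := Fin.ext (by omega)
          rw [hiq, hvq]
          exact (eqmk hqm).symm
        · exact hv i h
      exact hr1.trans (IH hmn0 w1 v hw1 hvm)
    · have hqlt : q.val < m := lt_of_le_of_ne hqle hqm
      set σ := Fin.cycleRange (⟨m, bm⟩ : Fin (n + 1)) with hσ
      have hσfix : ∀ (i : Fin (n + 1)), m < i.val → σ i = i := by
        intro i hi
        rw [hσ]
        exact Fin.cycleRange_of_gt (gtmk hi)
      have hσifix : ∀ (i : Fin (n + 1)), m < i.val → ∀ j : ℕ, ((σ⁻¹) ^ j) i = i := by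
        intro i hi
        apply pow_fix
        exact (Equiv.symm_apply_eq σ).2 (hσfix i hi).symm
      have hpow : ∀ j : ℕ, j ≤ m →
          (σ ^ j) ⟨m - j, tle (le_trans (Nat.sub_le m j) hmn0)⟩ = ⟨m, bm⟩ := by
        intro j
        induction j with
        | zero =>
          intro _
          rw [pow_zero, Perm.one_apply]
          exact mkeq rfl
        | succ j IHj =>
          intro hj
          have hs : σ (⟨m - (j+1), tle (le_trans (Nat.sub_le m (j+1)) hmn0)⟩ : Fin (n+1))
              = ⟨m - j, tle (le_trans (Nat.sub_le m j) hmn0)⟩ := by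
            rw [hσ, Fin.cycleRange_of_lt (mklt (a := m - (j+1)) (b := m) (by omega)),
              fin_add_one ⟨m - (j+1), tle (le_trans (Nat.sub_le m (j+1)) hmn0)⟩
                (show m - (j+1) < n by omega)]
            exact Fin.ext (show m - (j+1) + 1 = m - j by omega)
          rw [pow_succ, Perm.mul_apply, hs]
          exact IHj (by omega)
      have hinvm : ((σ⁻¹) ^ (m - q.val)) ⟨m, bm⟩ = q := by
        have h1 := hpow (m - q.val) (by omega)
        have e : (⟨m - (m - q.val), tle (le_trans (Nat.sub_le m (m - q.val)) hmn0)⟩ : Fin (n+1))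
            = q := (eqmk (x := q) (show q.val = m - (m - q.val) by omega)).symm
        rw [e] at h1
        rw [inv_pow]
        exact (Equiv.symm_apply_eq (σ ^ (m - q.val))).2 h1.symm
      have ht1m : Fixd m (v * (σ⁻¹) ^ (m - q.val)) := by
        intro i hi
        rcases eq_or_lt_of_le hi with h | h
        · have hie : i = ⟨m, bm⟩ := eqmk h.symm
          rw [hie, Perm.mul_apply, hinvm, hvq]
        · rw [Perm.mul_apply, hσifix i h, hv i (by omega)]
      have hr2 : Reach w1 (v * (σ⁻¹) ^ (m - q.val)) := IH hmn0 w1 _ hw1 ht1m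
      have ht1fix : ∀ j : ℕ, Fixd (m + 1) (v * (σ⁻¹) ^ (m - q.val) * σ ^ j) := by
        intro j i hi
        rw [Perm.mul_apply, pow_fix σ (hσfix i (by omega)) j, Perm.mul_apply,
          hσifix i (by omega), hv i hi]
      have hrot : ∀ j : ℕ, j ≤ m - q.val →
          Reach (v * (σ⁻¹) ^ (m - q.val)) (v * (σ⁻¹) ^ (m - q.val) * σ ^ j) := by
        intro j
        induction j with
        | zero =>
          intro _
          rw [pow_zero, mul_one]
          exact Reach.refl _
        | succ j IHj =>
          intro hj
          have hstep := rot (n - (m + 1)) (m + 1) (by omega) (by omega) hm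
            (v * (σ⁻¹) ^ (m - q.val) * σ ^ j) (ht1fix j)
          have e : (⟨m + 1 - 1, tle (le_trans (Nat.sub_le (m + 1) 1) hm)⟩ : Fin (n+1))
              = ⟨m, bm⟩ := mkeq rfl
          rw [e, ← hσ, mul_assoc (v * (σ⁻¹) ^ (m - q.val)) (σ ^ j) σ, ← pow_succ] at hstep
          exact (IHj (by omega)).trans hstep
      have hfinal : v * (σ⁻¹) ^ (m - q.val) * σ ^ (m - q.val) = v := by
        rw [mul_assoc, inv_pow, inv_mul_cancel, mul_one]
      have hall := hr1.trans (hr2.trans (hrot (m - q.val) le_rfl))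
      rwa [hfinal] at hall

end CpiAux

/-- The monoid generated by the circular bubble-sort operators `π_0, π_1, …, π_n` acts
transitively on permutations of `{1,…,n+1}`: any `u` can be mapped to any `v`. -/
theorem cpi_transitive (n : ℕ) (u v : Perm (Fin (n + 1))) :
    ∃ l : List (Fin (n + 1)), l.foldl (fun w j => cpi j w) u = v := by
  rcases Nat.eq_zero_or_pos n with h0 | hn
  · subst h0
    have huv : u = v := Equiv.ext fun i => Fin.ext (by omega)
    exact ⟨[], huv⟩
  · have hvac : CpiAux.Fixd (n + 1) u := fun i hi => absurd i.isLt (by omega)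
    obtain ⟨u1, hr1, hu1⟩ := CpiAux.home n le_rfl u hvac
    obtain ⟨q, hvq⟩ : ∃ q, v q = Fin.last n := ⟨_, Equiv.apply_symm_apply v _⟩
    by_cases hqn : q = Fin.last n
    · have hvfix : CpiAux.Fixd n v := by
        intro i hi
        have hie : i = Fin.last n := CpiAux.eqlast (by omega)
        rw [hie, ← hqn, hvq, hqn]
      exact hr1.trans (CpiAux.main n le_rfl u1 v hu1 hvfix)
    · have hqval : q.val ≤ n := by omega
      have hq' : (⟨q.val, CpiAux.tle hqval⟩ : Fin (n+1)) = q := Fin.ext rfl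
      have hgq : (Equiv.swap (0 : Fin (n+1)) (Fin.last n)
          * Fin.cycleRange ⟨q.val, CpiAux.tle hqval⟩) q = Fin.last n := by
        rw [Perm.mul_apply, Fin.cycleRange_of_eq hq'.symm, swap_apply_left]
      set g := Equiv.swap (0 : Fin (n+1)) (Fin.last n) * Fin.cycleRange ⟨q.val, CpiAux.tle hqval⟩
        with hgdef
      have htlast : (v * g⁻¹) (Fin.last n) = Fin.last n := by
        have hinv : g⁻¹ (Fin.last n) = q := (Equiv.symm_apply_eq g).2 hgq.symm
        rw [Perm.mul_apply, hinv, hvq]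
      have htfix : CpiAux.Fixd n (v * g⁻¹) := by
        intro i hi
        have hie : i = Fin.last n := CpiAux.eqlast (by omega)
        rw [hie, htlast]
      have hr2 := CpiAux.main n le_rfl u1 (v * g⁻¹) hu1 htfix
      have hr3 := CpiAux.place q.val hqval hn (v * g⁻¹) htlast
      rw [← hgdef] at hr3
      have hfin : v * g⁻¹ * g = v := by rw [mul_assoc, inv_mul_cancel, mul_one]
      rw [hfin] at hr3
      exact hr1.trans (hr2.trans hr3)
end

section
/- For a word x = (x_1,...,x_{n+1}) with x_1 = n+1 (the maximal letter), the composition π_0 π_n π_{n-1} ⋯ π_1 (first π_1, then π_2, ..., up to π_n, then π_0) cyclically rotates the last n letters one step to the left while keeping the maximal letter fixed in position 1: the result is (n+1, x_3, x_4, ..., x_{n+1}, x_2). -/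
open Equiv

private lemma take_succ_finRange (n k : ℕ) (h : k < n + 1) :
    (List.finRange (n+1)).take (k+1)
      = (List.finRange (n+1)).take k ++ [(⟨k, h⟩ : Fin (n+1))] := by
  rw [List.take_succ]
  simp [List.getElem?_eq_getElem, h]

private lemma cpi_invariant (n : ℕ) (x : Perm (Fin (n + 1))) (h : x 0 = Fin.last n)
    (k : ℕ) (hk : k ≤ n) :
    ∀ i : Fin (n+1),
      (((i : ℕ) < k → ((List.finRange (n+1)).take k).foldl (fun w j => cpi j w) x i = x (i+1)) ∧
       ((i : ℕ) = k → ((List.finRange (n+1)).take k).foldl (fun w j => cpi j w) x i = Fin.last n) ∧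
       ((i : ℕ) > k → ((List.finRange (n+1)).take k).foldl (fun w j => cpi j w) x i = x i)) := by
  induction k with
  | zero =>
    intro i
    refine ⟨by omega, ?_, fun _ => rfl⟩
    intro hi
    have : i = 0 := Fin.ext hi
    simp [this, h]
  | succ k ih =>
    have hk' : k ≤ n := by omega
    have hkn : k < n + 1 := by omega
    intro i
    set w := ((List.finRange (n+1)).take k).foldl (fun w j => cpi j w) x with hw
    have hfold : ((List.finRange (n+1)).take (k+1)).foldl (fun w j => cpi j w) x
        = cpi (⟨k, hkn⟩ : Fin (n+1)) w := by
      rw [take_succ_finRange n k hkn, List.foldl_append]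
      rfl
    have hadd : (⟨k, hkn⟩ : Fin (n+1)) + 1 = ⟨k+1, by omega⟩ := by
      ext; rw [Fin.val_add_one_of_lt]; · simp [Fin.lt_iff_val_lt_val]; omega
    have hwk : w ⟨k, hkn⟩ = Fin.last n := (ih hk' ⟨k, hkn⟩).2.1 rfl
    have hwk1 : w ⟨k+1, by omega⟩ = x ⟨k+1, by omega⟩ :=
      (ih hk' ⟨k+1, by omega⟩).2.2 (by simp)
    have hlt : w ((⟨k, hkn⟩ : Fin (n+1)) + 1) < w ⟨k, hkn⟩ := by
      rw [hadd, hwk, hwk1]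
      refine lt_of_le_of_ne (Fin.le_last _) ?_
      intro hc
      rw [← h] at hc
      have := x.injective hc
      exact absurd (congrArg Fin.val this) (by simp)
    have hcpi : cpi (⟨k, hkn⟩ : Fin (n+1)) w
        = w * Equiv.swap ⟨k, hkn⟩ (⟨k, hkn⟩ + 1) := if_pos hlt
    rw [hfold, hcpi, hadd]
    refine ⟨?_, ?_, ?_⟩
    · intro hi
      rcases Nat.lt_or_ge (i : ℕ) k with hik | hik
      · have h1 : i ≠ ⟨k, hkn⟩ := by rw [ne_eq, Fin.ext_iff]; simp; omega
        have h2 : i ≠ ⟨k+1, by omega⟩ := by rw [ne_eq, Fin.ext_iff]; simp; omega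
        rw [Perm.mul_apply, swap_apply_of_ne_of_ne h1 h2]
        exact (ih hk' i).1 hik
      · have hik' : (i : ℕ) = k := by omega
        have h1 : i = ⟨k, hkn⟩ := Fin.ext hik'
        rw [Perm.mul_apply, h1, swap_apply_left, hwk1, hadd]
    · intro hi
      have h1 : i = ⟨k+1, by omega⟩ := Fin.ext hi
      rw [Perm.mul_apply, h1, swap_apply_right, hwk]
    · intro hi
      have h1 : i ≠ ⟨k, hkn⟩ := by rw [ne_eq, Fin.ext_iff]; simp; omega
      have h2 : i ≠ ⟨k+1, by omega⟩ := by rw [ne_eq, Fin.ext_iff]; simp; omega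
      rw [Perm.mul_apply, swap_apply_of_ne_of_ne h1 h2]
      exact (ih hk' i).2.2 (by omega)

/-- If `x_1 = n+1` (the maximal letter), then applying first `π_1`, …, then `π_n`, then
`π_0` rotates the last `n` letters cyclically one step to the left, keeping the maximal
letter in position 1: the result is `(n+1, x_3, x_4, …, x_{n+1}, x_2)`. -/
theorem cpi_rotate (n : ℕ) (x : Perm (Fin (n + 1))) (h : x 0 = Fin.last n) :
    letI y := (List.finRange (n + 1)).foldl (fun w j => cpi j w) x
    y 0 = Fin.last n ∧ y (Fin.last n) = x 1 ∧
      ∀ j : Fin (n + 1), j ≠ 0 → j ≠ Fin.last n → y j = x (j + 1) := by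
  rcases Nat.eq_zero_or_pos n with hn | hn
  · subst hn
    refine ⟨Fin.fin_one_eq_zero _, (Fin.fin_one_eq_zero _).trans (Fin.fin_one_eq_zero _).symm,
      fun j hj _ => absurd (Fin.fin_one_eq_zero j) hj⟩
  -- n ≥ 1
  set w := ((List.finRange (n+1)).take n).foldl (fun w j => cpi j w) x with hw
  have hfull : (List.finRange (n+1)) = (List.finRange (n+1)).take n ++ [Fin.last n] := by
    have h1 := take_succ_finRange n n (by omega)
    have h2 : (List.finRange (n+1)).take (n+1) = List.finRange (n+1) := by simp
    rw [h2] at h1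
    exact h1.trans (by rfl)
  have hy : (List.finRange (n + 1)).foldl (fun w j => cpi j w) x = cpi (Fin.last n) w := by
    rw [hfull, List.foldl_append]
    rfl
  have hinv := cpi_invariant n x h n le_rfl
  have hwlast : w (Fin.last n) = Fin.last n := (hinv (Fin.last n)).2.1 rfl
  have hw0 : w 0 = x 1 := by
    have h0 : ((0 : Fin (n+1)) : ℕ) < n := by simpa using hn
    have := (hinv 0).1 h0
    simpa using this
  have hadd : Fin.last n + 1 = (0 : Fin (n+1)) := by simp
  have hlt : w (Fin.last n + 1) < w (Fin.last n) := by
    rw [hadd, hwlast, hw0]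
    refine lt_of_le_of_ne (Fin.le_last _) ?_
    intro hc
    rw [← h] at hc
    have := x.injective hc
    exact absurd (congrArg Fin.val this) (by simp; omega)
  have hcpi : cpi (Fin.last n) w = w * Equiv.swap (Fin.last n) (Fin.last n + 1) := if_pos hlt
  rw [hy, hcpi, hadd]
  have hne : (0 : Fin (n+1)) ≠ Fin.last n := by
    intro hc; exact absurd (congrArg Fin.val hc) (by simp; omega)
  refine ⟨?_, ?_, ?_⟩
  · rw [Perm.mul_apply, swap_apply_right, hwlast]
  · rw [Perm.mul_apply, swap_apply_left, hw0]
  · intro j hj hjl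
    rw [Perm.mul_apply, swap_apply_of_ne_of_ne hjl hj]
    have hjn : (j : ℕ) < n := by
      have := j.isLt
      have : (j : ℕ) ≠ n := fun hc => hjl (Fin.ext (by simpa using hc))
      omega
    exact (hinv j).1 hjn
end
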